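/- Let F : ℝ → ℝ be nondecreasing and right-continuous and satisfy the second-order Pareto tail condition with parameters (α, ρ, c, d), and define the generalized inverse Q(q) = inf{ y ∈ ℝ : F(y) ≥ q } for q ∈ (0, 1). Then the second-order quantile expansion holds: (1 − q)^(−ρ/α) · ( ((1 − q)/c)^(1/α) · Q(q) − 1 ) → (d/α) · c^(−ρ/α) as q → 1⁻. Equivalently, Q(1 − u) = (c/u)^(1/α) · (1 + (d/α)·(u/c)^(ρ/α) + o(u^(ρ/α))) as u → 0⁺. -/

import Mathlib

open Filter MeasureTheory Real Set

/-- Second-order Pareto tail condition with parameters `(α, ρ, c, d)`. -/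
def ParetoTail (F : ℝ → ℝ) (α ρ c d : ℝ) : Prop :=
  0 < α ∧ 0 < ρ ∧ 0 < c ∧
  ∃ y₀ : ℝ, 0 < y₀ ∧ ∃ e : ℝ → ℝ,
    Tendsto (fun y : ℝ => y ^ ρ * e y) atTop (nhds 0) ∧
    ∀ y : ℝ, y₀ ≤ y → 1 - F y = c * y ^ (-α) * (1 + d * y ^ (-ρ) + e y)

/-- Slope limit for `t ↦ (1+s*t)^(-α)` at `0`. -/
lemma slope_rpow_aux (s α : ℝ) :
    Tendsto (fun t : ℝ => ((1 + s * t) ^ (-α) - 1) / t) (nhdsWithin 0 {(0:ℝ)}ᶜ)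
      (nhds (-(α * s))) := by
  have hbase : HasDerivAt (fun t : ℝ => 1 + s * t) s 0 := by
    simpa using ((hasDerivAt_id (0:ℝ)).const_mul s).const_add 1
  have hpow : HasDerivAt (fun x : ℝ => x ^ (-α)) (-α * (1:ℝ) ^ (-α - 1)) (1 + s * 0) := by
    have : (1:ℝ) + s * 0 = 1 := by ring
    rw [this]
    exact Real.hasDerivAt_rpow_const (Or.inl one_ne_zero)
  have h := hpow.comp 0 hbase
  have h' := hasDerivAt_iff_tendsto_slope.1 h
  have heq : -α * (1:ℝ) ^ (-α - 1) * s = -(α * s) := by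
    rw [Real.one_rpow]; ring
  rw [heq] at h'
  refine h'.congr (fun t => ?_)
  simp [slope_def_field, Function.comp]

theorem statement9 (F : ℝ → ℝ) (α ρ c d : ℝ) (hF : ParetoTail F α ρ c d)
    (hmono : Monotone F) (hrc : ∀ x : ℝ, ContinuousWithinAt F (Set.Ici x) x) :
    Tendsto (fun q : ℝ =>
        (1 - q) ^ (-(ρ / α)) * (((1 - q) / c) ^ (1 / α) * sInf {y : ℝ | q ≤ F y} - 1))
      (nhdsWithin 1 (Set.Iio 1)) (nhds ((d / α) * c ^ (-(ρ / α)))) := by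
  obtain ⟨hα, hρ, hc, y₀, hy₀, e, he, heq⟩ := hF
  set l : Filter ℝ := nhdsWithin 0 (Set.Ioi 0) with hl
  set v : ℝ → ℝ := fun u => (u / c) ^ (ρ / α) with hv
  set Y : ℝ → ℝ → ℝ := fun s u => (c / u) ^ (1 / α) * (1 + s * v u) with hY
  set Q : ℝ → ℝ := fun u => sInf {y : ℝ | 1 - u ≤ F y} with hQ
  have hα' : α ≠ 0 := ne_of_gt hα
  have hc' : c ≠ 0 := ne_of_gt hc
  -- v tends to 0 within positives
  have hvpos : ∀ u : ℝ, 0 < u → 0 < v u := fun u hu =>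
    Real.rpow_pos_of_pos (div_pos hu hc) _
  have hv0 : Tendsto v l (nhds 0) := by
    have hcont : ContinuousAt (fun x : ℝ => x ^ (ρ / α)) 0 :=
      Real.continuousAt_rpow_const 0 _ (Or.inr (le_of_lt (div_pos hρ hα)))
    have h1 : Tendsto (fun u : ℝ => u / c) l (nhds 0) := by
      have h2 := ((continuous_id.div_const c).tendsto (0:ℝ)).mono_left
        (nhdsWithin_le_nhds (s := Set.Ioi (0:ℝ)))
      simpa using h2
    have := hcont.tendsto.comp h1
    simpa [Function.comp_def, Real.zero_rpow (ne_of_gt (div_pos hρ hα))] using this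
  have hvne : Tendsto v l (nhdsWithin 0 {(0:ℝ)}ᶜ) := by
    rw [tendsto_nhdsWithin_iff]
    refine ⟨hv0, ?_⟩
    filter_upwards [self_mem_nhdsWithin] with u hu
    exact ne_of_gt (hvpos u hu)
  -- the curve tends to infinity
  have hP : Tendsto (fun u : ℝ => (c / u) ^ (1 / α)) l atTop := by
    have h1 : Tendsto (fun u : ℝ => c / u) l atTop := by
      have h2 : Tendsto (fun u : ℝ => u⁻¹) l atTop := tendsto_inv_nhdsGT_zero
      have := h2.const_mul_atTop hc
      simpa [div_eq_mul_inv] using this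
    exact (tendsto_rpow_atTop (by positivity)).comp h1
  have hw : ∀ s : ℝ, Tendsto (fun u => 1 + s * v u) l (nhds 1) := by
    intro s
    have := (hv0.const_mul s).const_add 1
    simpa using this
  have hYtop : ∀ s : ℝ, Tendsto (Y s) l atTop := fun s => hP.atTop_mul_pos one_pos (hw s)
  -- e tends to 0 at infinity
  have he0 : Tendsto e atTop (nhds (0:ℝ)) := by
    have h1 : Tendsto (fun y : ℝ => y ^ (-ρ)) atTop (nhds 0) := tendsto_rpow_neg_atTop hρ
    have h2 : Tendsto (fun y : ℝ => y ^ (-ρ) * (y ^ ρ * e y)) atTop (nhds 0) := by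
      simpa using h1.mul he
    refine h2.congr' ?_
    filter_upwards [eventually_gt_atTop (0:ℝ)] with y hy
    rw [Real.rpow_neg hy.le]
    field_simp [ne_of_gt (Real.rpow_pos_of_pos hy ρ)]
  -- key asymptotic limit
  have key : ∀ s : ℝ, Tendsto
      (fun u => ((1 - F (Y s u)) / u - 1) / v u) l (nhds (d - α * s)) := by
    intro s
    set g : ℝ → ℝ := fun u => (Y s u) ^ ρ * e (Y s u) with hg
    have hg0 : Tendsto g l (nhds 0) := he.comp (hYtop s)
    set w : ℝ → ℝ := fun u => 1 + s * v u with hwdef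
    have hw1 : Tendsto w l (nhds 1) := hw s
    have hA : Tendsto (fun u => ((w u) ^ (-α) - 1) / v u) l (nhds (-(α * s))) :=
      (slope_rpow_aux s α).comp hvne
    have hwρ : Tendsto (fun u => (w u) ^ (-ρ)) l (nhds 1) := by
      have hcont : ContinuousAt (fun x : ℝ => x ^ (-ρ)) 1 :=
        Real.continuousAt_rpow_const 1 _ (Or.inl one_ne_zero)
      have := hcont.tendsto.comp hw1
      simpa [Function.comp_def, Real.one_rpow] using this
    have hRHS : Tendsto
        (fun u => ((w u) ^ (-α) - 1) / v u * (1 + (d + g u) * v u * (w u) ^ (-ρ))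
          + (d + g u) * (w u) ^ (-ρ)) l (nhds (d - α * s)) := by
      have h1 : Tendsto (fun u => 1 + (d + g u) * v u * (w u) ^ (-ρ)) l (nhds 1) := by
        have : Tendsto (fun u => (d + g u) * v u * (w u) ^ (-ρ)) l (nhds 0) := by
          have := ((hg0.const_add d).mul hv0).mul hwρ
          simpa using this
        simpa using this.const_add 1
      have h2 : Tendsto (fun u => (d + g u) * (w u) ^ (-ρ)) l (nhds d) := by
        have := (hg0.const_add d).mul hwρ
        simpa using this
      have := (hA.mul h1).add h2
      have hval : -(α * s) * 1 + d = d - α * s := by ring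
      rwa [hval] at this
    refine hRHS.congr' ?_
    -- eventual equality
    have hwev : ∀ᶠ u in l, (0:ℝ) < w u :=
      hw1.eventually_const_lt (by norm_num)
    have hYev : ∀ᶠ u in l, y₀ ≤ Y s u := (hYtop s).eventually_ge_atTop y₀
    filter_upwards [self_mem_nhdsWithin, hwev, hYev] with u hu hwu hYu
    have hu' : (0:ℝ) < u := hu
    have hPu : (0:ℝ) < (c / u) ^ (1 / α) := Real.rpow_pos_of_pos (div_pos hc hu') _
    have hYpos : (0:ℝ) < Y s u := mul_pos hPu hwu
    have hvu : (0:ℝ) < v u := hvpos u hu'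
    -- rpow identities
    have hPα : ((c / u) ^ (1 / α)) ^ (-α) = u / c := by
      rw [← Real.rpow_mul (div_pos hc hu').le]
      have : 1 / α * (-α) = -1 := by field_simp
      rw [this, Real.rpow_neg_one, inv_div]
    have hPρ : ((c / u) ^ (1 / α)) ^ (-ρ) = v u := by
      rw [← Real.rpow_mul (div_pos hc hu').le]
      have h3 : (1 / α) * (-ρ) = -(ρ / α) := by field_simp
      rw [h3, Real.rpow_neg (div_pos hc hu').le, hv]
      rw [← Real.inv_rpow (div_pos hc hu').le, inv_div]
    have hYα : (Y s u) ^ (-α) = (u / c) * (w u) ^ (-α) := by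
      rw [hY]
      rw [Real.mul_rpow hPu.le hwu.le, hPα]
    have hYρ : (Y s u) ^ (-ρ) = v u * (w u) ^ (-ρ) := by
      rw [hY]
      rw [Real.mul_rpow hPu.le hwu.le, hPρ]
    have heY : e (Y s u) = v u * (w u) ^ (-ρ) * g u := by
      rw [hg, ← hYρ, Real.rpow_neg hYpos.le]
      have hYρ' : (Y s u) ^ ρ ≠ 0 := ne_of_gt (Real.rpow_pos_of_pos hYpos ρ)
      field_simp
    rw [heq (Y s u) hYu, hYα, hYρ, heY]
    have hwα := Real.rpow_natCast (w u) 0 -- dummy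
    field_simp
    ring
  -- a uniform lower-bound point : some Y₁ with F Y₁ < 1
  have hEexp : Tendsto (fun y : ℝ => 1 + d * y ^ (-ρ) + e y) atTop (nhds 1) := by
    have h1 : Tendsto (fun y : ℝ => d * y ^ (-ρ)) atTop (nhds 0) := by
      simpa using (tendsto_rpow_neg_atTop hρ).const_mul d
    have h2 := (h1.add he0).const_add 1
    simp only [add_zero] at h2
    exact h2.congr (fun y => by ring)
  obtain ⟨Y₁, hY₁⟩ := ((hEexp.eventually_const_lt (by norm_num : (0:ℝ) < 1)).and
    (eventually_ge_atTop y₀)).exists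
  obtain ⟨hE₁, hY₁y₀⟩ := hY₁
  have hY₁pos : (0:ℝ) < Y₁ := lt_of_lt_of_le hy₀ hY₁y₀
  have hFY₁ : F Y₁ < 1 := by
    have := heq Y₁ hY₁y₀
    nlinarith [Real.rpow_pos_of_pos hY₁pos (-α), mul_pos (mul_pos hc (Real.rpow_pos_of_pos hY₁pos (-α))) hE₁]
  set δ : ℝ := 1 - F Y₁ with hδdef
  have hδ : (0:ℝ) < δ := by simp [hδdef]; linarith
  have hbdd : ∀ u : ℝ, 0 < u → u < δ → BddBelow {y : ℝ | 1 - u ≤ F y} := by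
    intro u hu huδ
    refine ⟨Y₁, fun y hy => ?_⟩
    by_contra h
    push_neg at h
    have : F y ≤ F Y₁ := hmono h.le
    have : (1:ℝ) - u ≤ F Y₁ := le_trans hy this
    simp only [hδdef] at huδ
    linarith
  -- core limit
  have core : Tendsto (fun u => ((u / c) ^ (1 / α) * Q u - 1) / v u) l (nhds (d / α)) := by
    rw [Metric.tendsto_nhds]
    intro ε hε
    have hε2 : (0:ℝ) < ε / 2 := by linarith
    have hkeyP := key (d / α + ε / 2)
    have hkeyM := key (d / α - ε / 2)
    have hlimP : d - α * (d / α + ε / 2) < 0 := by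
      have h3 : α * (d / α) = d := by field_simp
      have h4 : α * (d / α + ε / 2) = α * (d / α) + α * (ε / 2) := by ring
      have h5 : 0 < α * (ε / 2) := mul_pos hα hε2
      linarith
    have hlimM : (0:ℝ) < d - α * (d / α - ε / 2) := by
      have h3 : α * (d / α) = d := by field_simp
      have h4 : α * (d / α - ε / 2) = α * (d / α) - α * (ε / 2) := by ring
      have h5 : 0 < α * (ε / 2) := mul_pos hα hε2
      linarith
    have hevP : ∀ᶠ u in l, ((1 - F (Y (d / α + ε / 2) u)) / u - 1) / v u < 0 :=
      hkeyP.eventually_lt_const hlimP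
    have hevM : ∀ᶠ u in l, 0 < ((1 - F (Y (d / α - ε / 2) u)) / u - 1) / v u :=
      hkeyM.eventually_const_lt hlimM
    have hδev : ∀ᶠ u in l, u < δ :=
      eventually_nhdsWithin_of_eventually_nhds (Filter.Tendsto.eventually_lt_const hδ tendsto_id)
    have hwevP : ∀ᶠ u in l, (0:ℝ) < 1 + (d / α + ε / 2) * v u :=
      (hw (d / α + ε / 2)).eventually_const_lt (by norm_num)
    have hwevM : ∀ᶠ u in l, (0:ℝ) < 1 + (d / α - ε / 2) * v u :=
      (hw (d / α - ε / 2)).eventually_const_lt (by norm_num)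
    filter_upwards [self_mem_nhdsWithin, hevP, hevM, hδev, hwevP, hwevM] with u hu hP hM huδ hwP hwM
    have hu' : (0:ℝ) < u := hu
    have hvu : (0:ℝ) < v u := hvpos u hu'
    have hPu : (0:ℝ) < (u / c) ^ (1 / α) := Real.rpow_pos_of_pos (div_pos hu' hc) _
    have hPinv : (u / c) ^ (1 / α) * (c / u) ^ (1 / α) = 1 := by
      rw [← Real.mul_rpow (div_pos hu' hc).le (div_pos hc hu').le]
      rw [div_mul_div_comm, mul_comm u c, div_self (by positivity), Real.one_rpow]
    -- upper bound : F (YP) > 1 - u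
    have hTP : 1 - F (Y (d / α + ε / 2) u) < u := by
      have h1 : (1 - F (Y (d / α + ε / 2) u)) / u - 1 < 0 := by
        rcases lt_or_ge ((1 - F (Y (d / α + ε / 2) u)) / u - 1) 0 with h | h
        · exact h
        · exfalso; have := div_nonneg h hvu.le; linarith
      have := (div_lt_one hu').1 (by linarith)
      linarith
    have hmemP : Y (d / α + ε / 2) u ∈ {y : ℝ | 1 - u ≤ F y} := by
      simp only [Set.mem_setOf_eq]; linarith
    have hQle : Q u ≤ Y (d / α + ε / 2) u := csInf_le (hbdd u hu' huδ) hmemP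
    -- lower bound
    have hTM : u < 1 - F (Y (d / α - ε / 2) u) := by
      have h1 : 0 < (1 - F (Y (d / α - ε / 2) u)) / u - 1 := by
        rcases lt_or_ge 0 ((1 - F (Y (d / α - ε / 2) u)) / u - 1) with h | h
        · exact h
        · exfalso; have := div_nonpos_of_nonpos_of_nonneg h hvu.le; linarith
      have := (one_lt_div hu').1 (by linarith)
      linarith
    have hQge : Y (d / α - ε / 2) u ≤ Q u := by
      refine le_csInf ⟨_, hmemP⟩ (fun y hy => ?_)
      by_contra h
      push_neg at h
      have h2 : F y ≤ F (Y (d / α - ε / 2) u) := hmono h.le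
      simp only [Set.mem_setOf_eq] at hy
      linarith
    -- translate to bounds on (u/c)^(1/α) * Q u
    have hup : (u / c) ^ (1 / α) * Q u ≤ 1 + (d / α + ε / 2) * v u := by
      have := mul_le_mul_of_nonneg_left hQle hPu.le
      calc (u / c) ^ (1 / α) * Q u ≤ (u / c) ^ (1 / α) * Y (d / α + ε / 2) u := this
        _ = 1 + (d / α + ε / 2) * v u := by
            rw [hY]; rw [← mul_assoc, hPinv, one_mul]
    have hlo : 1 + (d / α - ε / 2) * v u ≤ (u / c) ^ (1 / α) * Q u := by
      have := mul_le_mul_of_nonneg_left hQge hPu.le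
      calc 1 + (d / α - ε / 2) * v u = (u / c) ^ (1 / α) * Y (d / α - ε / 2) u := by
            rw [hY]; rw [← mul_assoc, hPinv, one_mul]
        _ ≤ (u / c) ^ (1 / α) * Q u := this
    have hKup : ((u / c) ^ (1 / α) * Q u - 1) / v u ≤ d / α + ε / 2 := by
      rw [div_le_iff₀ hvu]; linarith
    have hKlo : d / α - ε / 2 ≤ ((u / c) ^ (1 / α) * Q u - 1) / v u := by
      rw [le_div_iff₀ hvu]; linarith
    rw [Real.dist_eq, abs_lt]
    constructor <;> linarith
  -- assemble
  have hH : Tendsto (fun u => u ^ (-(ρ / α)) * ((u / c) ^ (1 / α) * Q u - 1)) l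
      (nhds (d / α * c ^ (-(ρ / α)))) := by
    have h0 := core.mul_const (c ^ (-(ρ / α)))
    refine h0.congr' ?_
    filter_upwards [self_mem_nhdsWithin] with u hu
    have hu' : (0:ℝ) < u := hu
    have hue : u ^ (-(ρ / α)) = c ^ (-(ρ / α)) / v u := by
      rw [hv]
      simp only []
      rw [Real.div_rpow hu'.le hc.le, Real.rpow_neg hu'.le, Real.rpow_neg hc.le]
      have h1 : u ^ (ρ / α) ≠ 0 := ne_of_gt (Real.rpow_pos_of_pos hu' _)
      have h2 : c ^ (ρ / α) ≠ 0 := ne_of_gt (Real.rpow_pos_of_pos hc _)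
      field_simp
    rw [hue]
    ring
  have hmap : Tendsto (fun q : ℝ => 1 - q) (nhdsWithin 1 (Set.Iio 1)) l := by
    rw [hl]
    refine tendsto_nhdsWithin_of_tendsto_nhds_of_eventually_within _ ?_ ?_
    · have h1 : Continuous (fun q : ℝ => 1 - q) := continuous_const.sub continuous_id
      have h2 := h1.tendsto (1:ℝ)
      simpa using h2.mono_left (nhdsWithin_le_nhds (s := Set.Iio (1:ℝ)))
    · filter_upwards [self_mem_nhdsWithin] with q hq
      simp only [Set.mem_Iio] at hq
      simp only [Set.mem_Ioi]
      linarith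
  have hfinal := hH.comp hmap
  refine hfinal.congr (fun q => ?_)
  simp only [Function.comp, hQ, sub_sub_cancel]
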